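/- Let F satisfy the tangential cone condition on B with constant 0 ≤ c_tc < 1, let y, y^δ ∈ Y with ‖y − y^δ‖ ≤ δ for some δ ≥ 0, and let z ∈ B satisfy F(z) = y. Then for every x ∈ B and every continuous linear functional w ∈ Y*, one has |w(F'(x)(z − x)) + w(F(x) − y^δ)| ≤ ‖w‖·(δ + c_tc(‖F(x) − y^δ‖ + δ)). In other words, every solution z of F(x) = y in B lies in the stripe {v ∈ X : |⟨u*, v⟩ − α| ≤ ξ}, where u* = w ∘ F'(x), α = ⟨u*, x⟩ − w(F(x) − y^δ) and ξ = (δ + c_tc(‖F(x) − y^δ‖ + δ))‖w‖. -/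

import Mathlib

/-- Every solution `z ∈ B` of `F(x) = y` lies in the stripe determined by a point
`x ∈ B`, a dual element `w ∈ Y*`, and noisy data `y^δ` with `‖y − y^δ‖ ≤ δ`. -/
theorem solution_in_stripe
    {X Y : Type*} [NormedAddCommGroup X] [NormedSpace ℝ X] [CompleteSpace X]
    [NormedAddCommGroup Y] [NormedSpace ℝ Y] [CompleteSpace Y]
    (F : X → Y) (F' : X → X →L[ℝ] Y) (x₀ : X) (ρ : ℝ)
    (hdiff : ∀ x ∈ Metric.ball x₀ ρ, HasFDerivAt F (F' x) x)
    (ctc : ℝ) (hctc0 : 0 ≤ ctc) (hctc1 : ctc < 1)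
    (htcc : ∀ x ∈ Metric.ball x₀ ρ, ∀ x' ∈ Metric.ball x₀ ρ,
      ‖F x - F x' - F' x (x - x')‖ ≤ ctc * ‖F x - F x'‖)
    (y yδ : Y) (δ : ℝ) (hδ : 0 ≤ δ) (hnoise : ‖y - yδ‖ ≤ δ)
    (z : X) (hz : z ∈ Metric.ball x₀ ρ) (hFz : F z = y)
    (x : X) (hx : x ∈ Metric.ball x₀ ρ) (w : StrongDual ℝ Y) :
    |w (F' x (z - x)) + w (F x - yδ)| ≤ ‖w‖ * (δ + ctc * (‖F x - yδ‖ + δ)) := by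
  have htc := htcc x hx z hz
  have key : w (F' x (z - x)) + w (F x - yδ)
      = w ((F x - F z - F' x (x - z)) + (y - yδ)) := by
    rw [← hFz]
    have : F' x (z - x) = -(F' x (x - z)) := by rw [← map_neg, neg_sub]
    rw [← map_add, this]
    congr 1
    abel
  rw [key]
  calc |w ((F x - F z - F' x (x - z)) + (y - yδ))|
      ≤ ‖w‖ * ‖(F x - F z - F' x (x - z)) + (y - yδ)‖ := by
        rw [← Real.norm_eq_abs]; exact w.le_opNorm _
    _ ≤ ‖w‖ * (δ + ctc * (‖F x - yδ‖ + δ)) := by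
        apply mul_le_mul_of_nonneg_left _ (norm_nonneg w)
        calc ‖(F x - F z - F' x (x - z)) + (y - yδ)‖
            ≤ ‖F x - F z - F' x (x - z)‖ + ‖y - yδ‖ := norm_add_le _ _
          _ ≤ ctc * ‖F x - F z‖ + δ := add_le_add htc hnoise
          _ ≤ ctc * (‖F x - yδ‖ + δ) + δ := by
              apply add_le_add_left
              apply mul_le_mul_of_nonneg_left _ hctc0
              calc ‖F x - F z‖ = ‖(F x - yδ) + (yδ - y)‖ := by rw [hFz]; abel_nf
                _ ≤ ‖F x - yδ‖ + ‖yδ - y‖ := norm_add_le _ _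
                _ ≤ ‖F x - yδ‖ + δ :=
                    add_le_add_right (norm_sub_rev y yδ ▸ hnoise) _
          _ = δ + ctc * (‖F x - yδ‖ + δ) := by ring
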